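/- The Baker–Akhiezer functions and adjoint Baker–Akhiezer functions of the extended KP hierarchy satisfy: (i) P ψ(z) = z ψ(z), P* ψ†(z) = z ψ†(z), P̂ ψ̂(z) = z⁻¹ ψ̂(z), P̂* ψ̂†(z) = z⁻¹ ψ̂†(z); (ii) for every k ≥ 1 and each ψ̇ ∈ {ψ, ψ̂} and ψ̇† ∈ {ψ†, ψ̂†}: ∂ψ̇(z)/∂t_k = (P^k)₊ ψ̇(z), ∂ψ̇(z)/∂t̂_k = −(P̂^k)₋ ψ̇(z), ∂ψ̇†(z)/∂t_k = −((P^k)₊)* ψ̇†(z), ∂ψ̇†(z)/∂t̂_k = ((P̂^k)₋)* ψ̇†(z). -/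
import Mathlib


/-!
STATEMENT 9: The (adjoint) Baker–Akhiezer functions ψ = Φe^{ξ(t;z)},
ψ̂ = Φ̂e^{xz−ξ(t̂;z⁻¹)}, ψ† = (Φ⁻¹)*e^{−ξ(t;z)}, ψ̂† = (Φ̂⁻¹)*e^{−xz+ξ(t̂;z⁻¹)}
of the extended KP hierarchy satisfy
(i) Pψ = zψ, P*ψ† = zψ†, P̂ψ̂ = z⁻¹ψ̂, P̂*ψ̂† = z⁻¹ψ̂†;
(ii) ∂ψ̇/∂t_k = (P^k)₊ψ̇, ∂ψ̇/∂t̂_k = −(P̂^k)₋ψ̇ for ψ̇ ∈ {ψ, ψ̂}, and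
∂ψ̇†/∂t_k = −((P^k)₊)*ψ̇†, ∂ψ̇†/∂t̂_k = ((P̂^k)₋)*ψ̇† for ψ̇† ∈ {ψ†, ψ̂†}.

The operator algebra D (with splitting, adjoint * and flows) acts on a space W
of wave functions over the scalars K ∋ z; the exponential factors are vectors
E, Ê, E⁻, Ê⁻ of W on which ∂ and the flows act by the appropriate scalars.
-/

theorem stmt_9 {D : Type*} [Ring D] {K : Type*} [Field K]
    {W : Type*} [AddCommGroup W] [Module K W]
    (pos neg : D → D)
    (hsplit : ∀ x, pos x + neg x = x)
    (hpos_add : ∀ x y, pos (x + y) = pos x + pos y)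
    (hpos_idem : ∀ x, pos (pos x) = pos x)
    (hpos_mul : ∀ x y, pos (pos x * pos y) = pos x * pos y)
    (hneg_mul : ∀ x y, neg (neg x * neg y) = neg x * neg y)
    (hpos_one : pos 1 = 1)
    (star : D → D)
    (hstar_add : ∀ x y, star (x + y) = star x + star y)
    (hstar_mul : ∀ x y, star (x * y) = star y * star x)
    (hstar_star : ∀ x, star (star x) = x)
    (del Φ Φh : Dˣ)
    (hdel_pos : pos (del : D) = (del : D))
    (hstar_del : star (del : D) = -(del : D))
    (T Th : ℕ → D → D)
    (hT_add : ∀ k x y, T k (x + y) = T k x + T k y)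
    (hT_mul : ∀ k x y, T k (x * y) = T k x * y + x * T k y)
    (hT_pos : ∀ k x, T k (pos x) = pos (T k x))
    (hT_star : ∀ k x, T k (star x) = star (T k x))
    (hT_del : ∀ k, T k (del : D) = 0)
    (hTh_add : ∀ k x y, Th k (x + y) = Th k x + Th k y)
    (hTh_mul : ∀ k x y, Th k (x * y) = Th k x * y + x * Th k y)
    (hTh_pos : ∀ k x, Th k (pos x) = pos (Th k x))
    (hTh_star : ∀ k x, Th k (star x) = star (Th k x))
    (hTh_del : ∀ k, Th k (del : D) = 0)
    -- the action of operators on wave functions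
    (act : D → W → W)
    (hact_add : ∀ x y w, act (x + y) w = act x w + act y w)
    (hact_addw : ∀ x w w', act x (w + w') = act x w + act x w')
    (hact_mul : ∀ x y w, act (x * y) w = act x (act y w))
    (hact_one : ∀ w, act 1 w = w)
    (hact_smul : ∀ x (c : K) w, act x (c • w) = c • act x w)
    -- the flows on wave functions
    (Tw Thw : ℕ → W → W)
    (hTw_leib : ∀ k x w, Tw k (act x w) = act (T k x) w + act x (Tw k w))
    (hThw_leib : ∀ k x w, Thw k (act x w) = act (Th k x) w + act x (Thw k w))
    -- the nonzero parameter z and the exponential wave vectors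
    (z : Kˣ) (E Eh Ed Ehd : W)
    (hE_del : act (del : D) E = (z : K) • E)
    (hE_T : ∀ k : ℕ, 1 ≤ k → Tw k E = ((z ^ k : Kˣ) : K) • E)
    (hE_Th : ∀ k : ℕ, 1 ≤ k → Thw k E = 0)
    (hEh_del : act (del : D) Eh = (z : K) • Eh)
    (hEh_T : ∀ k : ℕ, 1 ≤ k → Tw k Eh = if k = 1 then (z : K) • Eh else 0)
    (hEh_Th : ∀ k : ℕ, 1 ≤ k → Thw k Eh = -(((z⁻¹ ^ k : Kˣ) : K) • Eh))
    (hEd_del : act (del : D) Ed = -((z : K) • Ed))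
    (hEd_T : ∀ k : ℕ, 1 ≤ k → Tw k Ed = -(((z ^ k : Kˣ) : K) • Ed))
    (hEd_Th : ∀ k : ℕ, 1 ≤ k → Thw k Ed = 0)
    (hEhd_del : act (del : D) Ehd = -((z : K) • Ehd))
    (hEhd_T : ∀ k : ℕ, 1 ≤ k → Tw k Ehd = if k = 1 then -((z : K) • Ehd) else 0)
    (hEhd_Th : ∀ k : ℕ, 1 ≤ k → Thw k Ehd = ((z⁻¹ ^ k : Kˣ) : K) • Ehd) :
    let P : Dˣ := Φ * del * Φ⁻¹
    let Ph : Dˣ := Φh * del⁻¹ * Φh⁻¹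
    -- the extended KP hierarchy:
    (∀ k : ℕ, 1 ≤ k →
      T k (Φ : D) = -(neg ((P ^ k : Dˣ) : D)) * (Φ : D)) →
    (∀ k : ℕ, 1 ≤ k →
      T k (Φh : D)
        = (pos ((P ^ k : Dˣ) : D) - (if k = 1 then ((Ph⁻¹ : Dˣ) : D) else 0))
            * (Φh : D)) →
    (∀ k : ℕ, 1 ≤ k →
      Th k (Φ : D) = -(neg ((Ph ^ k : Dˣ) : D)) * (Φ : D)) →
    (∀ k : ℕ, 1 ≤ k →
      Th k (Φh : D) = pos ((Ph ^ k : Dˣ) : D) * (Φh : D)) →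
    -- the (adjoint) Baker–Akhiezer functions
    (let ψ : W := act (Φ : D) E
     let ψh : W := act (Φh : D) Eh
     let ψd : W := act (star ((Φ⁻¹ : Dˣ) : D)) Ed
     let ψhd : W := act (star ((Φh⁻¹ : Dˣ) : D)) Ehd
     -- (i)
     (act (P : D) ψ = (z : K) • ψ ∧
      act (star (P : D)) ψd = (z : K) • ψd ∧
      act (Ph : D) ψh = ((z⁻¹ : Kˣ) : K) • ψh ∧
      act (star (Ph : D)) ψhd = ((z⁻¹ : Kˣ) : K) • ψhd) ∧
     -- (ii)
     (∀ k : ℕ, 1 ≤ k →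
      Tw k ψ = act (pos ((P ^ k : Dˣ) : D)) ψ ∧
      Tw k ψh = act (pos ((P ^ k : Dˣ) : D)) ψh ∧
      Thw k ψ = -(act (neg ((Ph ^ k : Dˣ) : D)) ψ) ∧
      Thw k ψh = -(act (neg ((Ph ^ k : Dˣ) : D)) ψh) ∧
      Tw k ψd = -(act (star (pos ((P ^ k : Dˣ) : D))) ψd) ∧
      Tw k ψhd = -(act (star (pos ((P ^ k : Dˣ) : D))) ψhd) ∧
      Thw k ψd = act (star (neg ((Ph ^ k : Dˣ) : D))) ψd ∧
      Thw k ψhd = act (star (neg ((Ph ^ k : Dˣ) : D))) ψhd)) := by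
  intro P Ph hKP1 hKP2 hKP3 hKP4
  -- basic consequences of the axioms
  have act0 : ∀ w : W, act 0 w = 0 := by
    intro w
    have h := hact_add 0 0 w
    rw [add_zero] at h
    exact left_eq_add.mp h
  have actw0 : ∀ x : D, act x (0 : W) = 0 := by
    intro x
    have h := hact_addw x 0 0
    rw [add_zero] at h
    exact left_eq_add.mp h
  have act_neg : ∀ (x : D) (w : W), act (-x) w = -(act x w) := by
    intro x w
    have h := hact_add x (-x) w
    rw [add_neg_cancel, act0] at h
    exact eq_neg_of_add_eq_zero_right h.symm
  have act_negw : ∀ (x : D) (w : W), act x (-w) = -(act x w) := by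
    intro x w
    have h := hact_addw x w (-w)
    rw [add_neg_cancel, actw0] at h
    exact eq_neg_of_add_eq_zero_right h.symm
  have act_sub : ∀ (x y : D) (w : W), act (x - y) w = act x w - act y w := by
    intro x y w
    rw [sub_eq_add_neg, hact_add, act_neg, ← sub_eq_add_neg]
  have star_one : star 1 = 1 := by
    have h := hstar_mul (star 1) 1
    rw [mul_one, hstar_star, mul_one] at h
    exact h.symm
  have star_zero : star 0 = 0 := by
    have h := hstar_add 0 0
    rw [add_zero] at h
    exact left_eq_add.mp h
  have star_neg : ∀ x, star (-x) = -(star x) := by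
    intro x
    have h := hstar_add x (-x)
    rw [add_neg_cancel, star_zero] at h
    exact eq_neg_of_add_eq_zero_right h.symm
  have star_sub : ∀ x y, star (x - y) = star x - star y := by
    intro x y
    rw [sub_eq_add_neg, hstar_add, star_neg, ← sub_eq_add_neg]
  have star_pow : ∀ (x : D) (k : ℕ), star (x ^ k) = (star x) ^ k := by
    intro x k
    induction k with
    | zero => rw [pow_zero, pow_zero, star_one]
    | succ n ih => rw [pow_succ, hstar_mul, ih, ← pow_succ']
  have T_one : ∀ k, T k 1 = 0 := by
    intro k
    have h := hT_mul k 1 1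
    rw [mul_one, mul_one, one_mul] at h
    exact left_eq_add.mp h
  have Th_one : ∀ k, Th k 1 = 0 := by
    intro k
    have h := hTh_mul k 1 1
    rw [mul_one, mul_one, one_mul] at h
    exact left_eq_add.mp h
  have T_inv : ∀ k (U : Dˣ), T k ((↑U⁻¹ : D)) = -((↑U⁻¹ : D) * T k (U : D) * ↑U⁻¹) := by
    intro k U
    have h := hT_mul k (U : D) (↑U⁻¹)
    rw [Units.mul_inv, T_one] at h
    have h2 : (U : D) * T k ((↑U⁻¹ : D)) = -(T k (U : D) * ↑U⁻¹) :=
      eq_neg_of_add_eq_zero_right h.symm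
    calc T k ((↑U⁻¹ : D)) = ↑U⁻¹ * ((U : D) * T k ((↑U⁻¹ : D))) := by
          rw [← mul_assoc, Units.inv_mul, one_mul]
      _ = -((↑U⁻¹ : D) * T k (U : D) * ↑U⁻¹) := by rw [h2, mul_neg, mul_assoc]
  have Th_inv : ∀ k (U : Dˣ), Th k ((↑U⁻¹ : D)) = -((↑U⁻¹ : D) * Th k (U : D) * ↑U⁻¹) := by
    intro k U
    have h := hTh_mul k (U : D) (↑U⁻¹)
    rw [Units.mul_inv, Th_one] at h
    have h2 : (U : D) * Th k ((↑U⁻¹ : D)) = -(Th k (U : D) * ↑U⁻¹) :=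
      eq_neg_of_add_eq_zero_right h.symm
    calc Th k ((↑U⁻¹ : D)) = ↑U⁻¹ * ((U : D) * Th k ((↑U⁻¹ : D))) := by
          rw [← mul_assoc, Units.inv_mul, one_mul]
      _ = -((↑U⁻¹ : D) * Th k (U : D) * ↑U⁻¹) := by rw [h2, mul_neg, mul_assoc]
  have act_cancel : ∀ (U : Dˣ) (w : W), act (↑U⁻¹ : D) (act (U : D) w) = w := by
    intro U w
    rw [← hact_mul, Units.inv_mul, hact_one]
  have star_cancel : ∀ (U : Dˣ) (w : W),
      act (star (U : D)) (act (star (↑U⁻¹ : D)) w) = w := by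
    intro U w
    rw [← hact_mul, ← hstar_mul, Units.inv_mul, star_one, hact_one]
  have inv_eig : ∀ (x y : D) (c : Kˣ) (w : W), y * x = 1 → act x w = (c : K) • w →
      act y w = ((c⁻¹ : Kˣ) : K) • w := by
    intro x y c w hyx h
    have h1 : act y (act x w) = w := by rw [← hact_mul, hyx, hact_one]
    rw [h, hact_smul] at h1
    calc act y w = ((c⁻¹ : Kˣ) : K) • ((c : K) • act y w) := by
          rw [smul_smul, ← Units.val_mul, inv_mul_cancel, Units.val_one, one_smul]
      _ = ((c⁻¹ : Kˣ) : K) • w := by rw [h1]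
  have act_pow : ∀ (x : D) (c : K) (w : W), act x w = c • w →
      ∀ k : ℕ, act (x ^ k) w = c ^ k • w := by
    intro x c w h k
    induction k with
    | zero => rw [pow_zero, pow_zero, hact_one, one_smul]
    | succ n ih => rw [pow_succ, hact_mul, h, hact_smul, ih, smul_smul, ← pow_succ']
  have conj_simp : ∀ (N : D) (U : Dˣ), -((↑U⁻¹ : D) * (-N * ↑U) * ↑U⁻¹) = ↑U⁻¹ * N := by
    intro N U
    rw [neg_mul, mul_neg, neg_mul, neg_neg, mul_assoc, mul_assoc, Units.mul_inv, mul_one]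
  have conj_simp2 : ∀ (N : D) (U : Dˣ), -((↑U⁻¹ : D) * (N * ↑U) * ↑U⁻¹) = -(↑U⁻¹ * N) := by
    intro N U
    rw [mul_assoc, mul_assoc, Units.mul_inv, mul_one]
  -- unfoldings
  have hP : (P : D) = ↑Φ * ↑del * ↑Φ⁻¹ := rfl
  have hPh : (Ph : D) = ↑Φh * ↑del⁻¹ * ↑Φh⁻¹ := rfl
  have hPhinv : ((Ph⁻¹ : Dˣ) : D) = ↑Φh * ↑del * ↑Φh⁻¹ := by
    have h : Ph⁻¹ = Φh * del * Φh⁻¹ := by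
      show (Φh * del⁻¹ * Φh⁻¹)⁻¹ = Φh * del * Φh⁻¹
      group
    rw [h, Units.val_mul, Units.val_mul]
  intro ψ ψh ψd ψhd
  have hψ : ψ = act (↑Φ : D) E := rfl
  have hψh : ψh = act (↑Φh : D) Eh := rfl
  have hψd : ψd = act (star (↑Φ⁻¹ : D)) Ed := rfl
  have hψhd : ψhd = act (star (↑Φh⁻¹ : D)) Ehd := rfl
  -- part (i)
  have eig1 : act (P : D) ψ = (z : K) • ψ := by
    rw [hP, hact_mul, hact_mul, hψ, act_cancel, hE_del, hact_smul]
  have eig2 : act (star (P : D)) ψd = (z : K) • ψd := by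
    have hsP : star (P : D) = star (↑Φ⁻¹ : D) * (star (↑del : D) * star (↑Φ : D)) := by
      rw [hP, hstar_mul, hstar_mul]
    rw [hsP, hact_mul, hact_mul, hψd, star_cancel, hstar_del, act_neg, hEd_del, neg_neg,
      hact_smul]
  have hdelinvEh : act (↑del⁻¹ : D) Eh = ((z⁻¹ : Kˣ) : K) • Eh :=
    inv_eig (↑del) (↑del⁻¹) z Eh (Units.inv_mul del) hEh_del
  have eig3 : act (Ph : D) ψh = ((z⁻¹ : Kˣ) : K) • ψh := by
    rw [hPh, hact_mul, hact_mul, hψh, act_cancel, hdelinvEh, hact_smul]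
  have eig4 : act (star (Ph : D)) ψhd = ((z⁻¹ : Kˣ) : K) • ψhd := by
    have hsPh : star (Ph : D)
        = star (↑Φh⁻¹ : D) * (star (↑del⁻¹ : D) * star (↑Φh : D)) := by
      rw [hPh, hstar_mul, hstar_mul]
    have hdel' : act (star (↑del⁻¹ : D)) Ehd = ((z⁻¹ : Kˣ) : K) • Ehd := by
      have hmul : star (↑del⁻¹ : D) * (-(↑del : D)) = 1 := by
        rw [← hstar_del, ← hstar_mul, Units.mul_inv, star_one]
      have hx : act (-(↑del : D)) Ehd = (z : K) • Ehd := by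
        rw [act_neg, hEhd_del, neg_neg]
      exact inv_eig _ _ z Ehd hmul hx
    rw [hsPh, hact_mul, hact_mul, hψhd, star_cancel, hdel', hact_smul]
  -- eigenvalue facts for powers
  have eigPk : ∀ k : ℕ, act ((P ^ k : Dˣ) : D) ψ = ((z ^ k : Kˣ) : K) • ψ := by
    intro k
    rw [Units.val_pow_eq_pow_val, Units.val_pow_eq_pow_val]
    exact act_pow _ _ _ eig1 k
  have eigPhk : ∀ k : ℕ, act ((Ph ^ k : Dˣ) : D) ψh = ((z⁻¹ ^ k : Kˣ) : K) • ψh := by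
    intro k
    rw [Units.val_pow_eq_pow_val, Units.val_pow_eq_pow_val]
    exact act_pow _ _ _ eig3 k
  have eigsPk : ∀ k : ℕ, act (star ((P ^ k : Dˣ) : D)) ψd = ((z ^ k : Kˣ) : K) • ψd := by
    intro k
    rw [Units.val_pow_eq_pow_val, Units.val_pow_eq_pow_val, star_pow]
    exact act_pow _ _ _ eig2 k
  have eigsPhk : ∀ k : ℕ, act (star ((Ph ^ k : Dˣ) : D)) ψhd
      = ((z⁻¹ ^ k : Kˣ) : K) • ψhd := by
    intro k
    rw [Units.val_pow_eq_pow_val, Units.val_pow_eq_pow_val, star_pow]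
    exact act_pow _ _ _ eig4 k
  refine ⟨⟨eig1, eig2, eig3, eig4⟩, ?_⟩
  intro k hk
  refine ⟨?_, ?_, ?_, ?_, ?_, ?_, ?_, ?_⟩
  -- (A) Tw k ψ
  · have hsp : act (pos ((P ^ k : Dˣ) : D)) ψ + act (neg ((P ^ k : Dˣ) : D)) ψ
        = ((z ^ k : Kˣ) : K) • ψ := by
      rw [← hact_add, hsplit]; exact eigPk k
    have h := hTw_leib k (↑Φ : D) E
    rw [← hψ, hKP1 k hk, hE_T k hk, hact_smul, hact_mul, act_neg, ← hψ] at h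
    rw [h, ← hsp]
    abel
  -- (B) Tw k ψh
  · by_cases hk1 : k = 1
    · subst hk1
      have hPhinvψh : act ((↑(Ph⁻¹) : D)) ψh = (z : K) • ψh := by
        rw [hPhinv, hact_mul, hact_mul, hψh, act_cancel, hEh_del, hact_smul]
      have h := hTw_leib 1 (↑Φh : D) Eh
      rw [← hψh, hKP2 1 hk, if_pos rfl, hEh_T 1 hk, if_pos rfl, hact_smul, hact_mul,
        act_sub, ← hψh] at h
      rw [h, hPhinvψh]
      abel
    · have h := hTw_leib k (↑Φh : D) Eh
      rw [← hψh, hKP2 k hk, if_neg hk1, sub_zero, hEh_T k hk, if_neg hk1, actw0,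
        add_zero, hact_mul, ← hψh] at h
      exact h
  -- (C) Thw k ψ
  · have h := hThw_leib k (↑Φ : D) E
    rw [← hψ, hKP3 k hk, hE_Th k hk, actw0, add_zero, hact_mul, act_neg, ← hψ] at h
    exact h
  -- (D) Thw k ψh
  · have hsp : act (pos ((Ph ^ k : Dˣ) : D)) ψh + act (neg ((Ph ^ k : Dˣ) : D)) ψh
        = ((z⁻¹ ^ k : Kˣ) : K) • ψh := by
      rw [← hact_add, hsplit]; exact eigPhk k
    have h := hThw_leib k (↑Φh : D) Eh
    rw [← hψh, hKP4 k hk, hEh_Th k hk, act_negw, hact_smul, hact_mul, ← hψh] at h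
    rw [h, ← hsp]
    abel
  -- (E) Tw k ψd
  · have hTd : T k (star (↑Φ⁻¹ : D))
        = star (neg ((P ^ k : Dˣ) : D)) * star (↑Φ⁻¹ : D) := by
      rw [hT_star, T_inv, hKP1 k hk, conj_simp, hstar_mul]
    have hsp : act (star (pos ((P ^ k : Dˣ) : D))) ψd
        + act (star (neg ((P ^ k : Dˣ) : D))) ψd = ((z ^ k : Kˣ) : K) • ψd := by
      rw [← hact_add, ← hstar_add, hsplit]; exact eigsPk k
    have h := hTw_leib k (star (↑Φ⁻¹ : D)) Ed
    rw [← hψd, hTd, hEd_T k hk, act_negw, hact_smul, hact_mul, ← hψd] at h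
    rw [h, ← hsp]
    abel
  -- (F) Tw k ψhd
  · have hTdh : T k (star (↑Φh⁻¹ : D))
        = -(star (pos ((P ^ k : Dˣ) : D) - if k = 1 then ((Ph⁻¹ : Dˣ) : D) else 0)
            * star (↑Φh⁻¹ : D)) := by
      rw [hT_star, T_inv, hKP2 k hk, conj_simp2, star_neg, hstar_mul]
    by_cases hk1 : k = 1
    · subst hk1
      have hsPhinv : act (star ((↑(Ph⁻¹) : D))) ψhd = (z : K) • ψhd := by
        have hs : star ((↑(Ph⁻¹) : D))
            = star (↑Φh⁻¹ : D) * (star (↑del : D) * star (↑Φh : D)) := by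
          rw [hPhinv, hstar_mul, hstar_mul]
        rw [hs, hact_mul, hact_mul, hψhd, star_cancel, hstar_del, act_neg, hEhd_del,
          neg_neg, hact_smul]
      have h := hTw_leib 1 (star (↑Φh⁻¹ : D)) Ehd
      rw [← hψhd, hTdh, if_pos rfl, star_sub, hEhd_T 1 hk, if_pos rfl, act_negw,
        hact_smul, act_neg, hact_mul, act_sub, ← hψhd] at h
      rw [h, hsPhinv]
      abel
    · have h := hTw_leib k (star (↑Φh⁻¹ : D)) Ehd
      rw [← hψhd, hTdh, if_neg hk1, sub_zero, hEhd_T k hk, if_neg hk1, actw0, add_zero,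
        act_neg, hact_mul, ← hψhd] at h
      exact h
  -- (G) Thw k ψd
  · have hThd : Th k (star (↑Φ⁻¹ : D))
        = star (neg ((Ph ^ k : Dˣ) : D)) * star (↑Φ⁻¹ : D) := by
      rw [hTh_star, Th_inv, hKP3 k hk, conj_simp, hstar_mul]
    have h := hThw_leib k (star (↑Φ⁻¹ : D)) Ed
    rw [← hψd, hThd, hEd_Th k hk, actw0, add_zero, hact_mul, ← hψd] at h
    exact h
  -- (H) Thw k ψhd
  · have hThdh : Th k (star (↑Φh⁻¹ : D))
        = -(star (pos ((Ph ^ k : Dˣ) : D)) * star (↑Φh⁻¹ : D)) := by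
      rw [hTh_star, Th_inv, hKP4 k hk, conj_simp2, star_neg, hstar_mul]
    have hsp : act (star (pos ((Ph ^ k : Dˣ) : D))) ψhd
        + act (star (neg ((Ph ^ k : Dˣ) : D))) ψhd = ((z⁻¹ ^ k : Kˣ) : K) • ψhd := by
      rw [← hact_add, ← hstar_add, hsplit]; exact eigsPhk k
    have h := hThw_leib k (star (↑Φh⁻¹ : D)) Ehd
    rw [← hψhd, hThdh, hEhd_Th k hk, hact_smul, act_neg, hact_mul, ← hψhd] at h
    rw [h, ← hsp]
    abel
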